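/- Let μ be a Borel probability measure on ℝ with support contained in [a, b] where 0 < a ≤ b. Then: (i) ψ_μ is differentiable at every z ∈ (−∞, 0] with ψ_μ'(z) = ∫ x/(1 − zx)² dμ(x) > 0; (ii) ψ_μ(0) = 0; (iii) ψ_μ(z) → −1 as z → −∞; and (iv) the restriction of ψ_μ to (−∞, 0] is a strictly increasing bijection from (−∞, 0] onto (−1, 0]. -/

import Mathlib

open MeasureTheory Filter

theorem stmt7 (a b : ℝ) (ha : 0 < a) (hab : a ≤ b)
    (μ : Measure ℝ) [IsProbabilityMeasure μ] (hsupp : ∀ᵐ x ∂μ, x ∈ Set.Icc a b)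
    (ψ : ℝ → ℝ) (hψ : ∀ z : ℝ, ψ z = ∫ x, (z * x) / (1 - z * x) ∂μ) :
    (∀ z : ℝ, z ≤ 0 →
        HasDerivAt ψ (∫ x, x / (1 - z * x) ^ 2 ∂μ) z ∧ 0 < ∫ x, x / (1 - z * x) ^ 2 ∂μ) ∧
    ψ 0 = 0 ∧
    Tendsto ψ atBot (nhds (-1)) ∧
    StrictMonoOn ψ (Set.Iic 0) ∧
    Set.BijOn ψ (Set.Iic 0) (Set.Ioc (-1) 0) := by
  have hψf : ψ = fun z => ∫ x, (z * x) / (1 - z * x) ∂μ := funext hψ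
  subst hψf
  have hb : (0:ℝ) < b := ha.trans_le hab
  -- measurability of the integrands
  have hmeas : ∀ z : ℝ, AEStronglyMeasurable (fun x => z * x / (1 - z * x)) μ := by
    intro z
    exact ((measurable_const.mul measurable_id).div
      (measurable_const.sub (measurable_const.mul measurable_id))).aestronglyMeasurable
  have hmeas' : ∀ z : ℝ, AEStronglyMeasurable (fun x : ℝ => x / (1 - z * x) ^ 2) μ := by
    intro z
    exact (measurable_id.div
      ((measurable_const.sub (measurable_const.mul measurable_id)).pow_const 2)).aestronglyMeasurable
  -- basic denominator bound for z ≤ 0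
  have hden : ∀ z : ℝ, z ≤ 0 → ∀ x ∈ Set.Icc a b, (1:ℝ) ≤ 1 - z * x := by
    intro z hz x hx
    nlinarith [hx.1, hx.2]
  -- integrability of the integrand for z ≤ 0
  have hint : ∀ z : ℝ, z ≤ 0 → Integrable (fun x => z * x / (1 - z * x)) μ := by
    intro z hz
    refine (integrable_const (1:ℝ)).mono' (hmeas z) ?_
    filter_upwards [hsupp] with x hx
    have h1 : (1:ℝ) ≤ 1 - z * x := hden z hz x hx
    have hzx : z * x ≤ 0 := mul_nonpos_of_nonpos_of_nonneg hz (ha.le.trans hx.1)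
    rw [Real.norm_eq_abs, abs_div, abs_of_nonpos hzx, abs_of_pos (by linarith : (0:ℝ) < 1 - z * x)]
    rw [div_le_one (by linarith)]
    linarith
  -- derivative lemma
  have hderiv : ∀ z : ℝ, z ≤ 0 →
      Integrable (fun x : ℝ => x / (1 - z * x) ^ 2) μ ∧
      HasDerivAt (fun w => ∫ x, w * x / (1 - w * x) ∂μ) (∫ x, x / (1 - z * x) ^ 2 ∂μ) z := by
    intro z hz
    have hε : (0:ℝ) < 1 / (2 * b) := by positivity
    have key : ∀ w ∈ Metric.ball z (1 / (2 * b)), ∀ x ∈ Set.Icc a b,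
        (1:ℝ)/2 ≤ 1 - w * x := by
      intro w hw x hx
      have hwlt : w < 1 / (2 * b) := by
        have := Metric.mem_ball.mp hw
        rw [Real.dist_eq] at this
        have := (abs_lt.mp this).2
        linarith
      rcases le_or_gt w 0 with h | h
      · have : w * x ≤ 0 := mul_nonpos_of_nonpos_of_nonneg h (ha.le.trans hx.1)
        linarith
      · have hxb : w * x ≤ w * b := by nlinarith [hx.2]
        have h1 : w * (2 * b) < 1 := (lt_div_iff₀ (by positivity)).mp hwlt
        nlinarith
    have := hasDerivAt_integral_of_dominated_loc_of_deriv_le (𝕜 := ℝ)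
      (F := fun w x => w * x / (1 - w * x)) (F' := fun w x => x / (1 - w * x) ^ 2)
      (bound := fun _ => 4 * b) (Metric.ball_mem_nhds z hε)
      (Eventually.of_forall fun w => hmeas w) (hint z hz) (hmeas' z)
      ?_ (integrable_const _) ?_
    · exact this
    · -- bound
      filter_upwards [hsupp] with x hx w hw
      have h2 : (1:ℝ)/2 ≤ 1 - w * x := key w hw x hx
      have hx0 : (0:ℝ) < x := ha.trans_le hx.1
      rw [Real.norm_eq_abs, abs_div, abs_of_pos hx0, abs_of_pos (by positivity : (0:ℝ) < (1 - w*x)^2)]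
      rw [div_le_iff₀ (by positivity)]
      have hsq : (1:ℝ)/4 ≤ (1 - w * x)^2 := by nlinarith
      nlinarith [hx.2, mul_le_mul_of_nonneg_left hsq (by positivity : (0:ℝ) ≤ 4*b)]
    · -- pointwise derivative
      filter_upwards [hsupp] with x hx w hw
      have h2 : (1:ℝ)/2 ≤ 1 - w * x := key w hw x hx
      have hne : (1:ℝ) - w * x ≠ 0 := by linarith
      have h1 : HasDerivAt (fun w : ℝ => w * x) x w := by
        simpa using (hasDerivAt_id w).mul_const x
      have h2' : HasDerivAt (fun w : ℝ => 1 - w * x) (-x) w := by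
        simpa using h1.const_sub 1
      have := h1.div h2' hne
      rw [show x * (1 - w * x) - w * x * (-x) = x by ring] at this
      exact this
  -- positivity of the derivative
  have hpos : ∀ z : ℝ, z ≤ 0 → 0 < ∫ x, x / (1 - z * x) ^ 2 ∂μ := by
    intro z hz
    have hdb : (0:ℝ) < 1 - z * b := by nlinarith
    have hc : (0:ℝ) < a / (1 - z * b) ^ 2 := by positivity
    have hle : ∀ᵐ x ∂μ, a / (1 - z * b) ^ 2 ≤ x / (1 - z * x) ^ 2 := by
      filter_upwards [hsupp] with x hx
      have h1 : (1:ℝ) ≤ 1 - z * x := hden z hz x hx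
      have h2 : 1 - z * x ≤ 1 - z * b := by nlinarith [hx.2]
      exact div_le_div₀ (by linarith [hx.1] : (0:ℝ) ≤ x) hx.1 (by positivity)
        (by nlinarith)
    have := integral_mono_ae (integrable_const _) (hderiv z hz).1 hle
    rw [integral_const, probReal_univ, smul_eq_mul, one_mul] at this
    linarith
  have hpsi0 : (∫ x, (0:ℝ) * x / (1 - 0 * x) ∂μ) = 0 := by simp
  -- bounds on ψ for z ≤ 0
  have hub : ∀ z : ℝ, z ≤ 0 → (∫ x, z * x / (1 - z * x) ∂μ) ≤ 0 := by
    intro z hz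
    refine integral_nonpos_of_ae ?_
    filter_upwards [hsupp] with x hx
    have h1 : (1:ℝ) ≤ 1 - z * x := hden z hz x hx
    have hzx : z * x ≤ 0 := mul_nonpos_of_nonpos_of_nonneg hz (ha.le.trans hx.1)
    exact div_nonpos_of_nonpos_of_nonneg hzx (by linarith)
  have hlb : ∀ z : ℝ, z ≤ 0 → -1 < ∫ x, z * x / (1 - z * x) ∂μ := by
    intro z hz
    have hdb : (0:ℝ) < 1 - z * b := by nlinarith
    have hle : ∀ᵐ x ∂μ, -1 + 1 / (1 - z * b) ≤ z * x / (1 - z * x) := by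
      filter_upwards [hsupp] with x hx
      have h1 : (1:ℝ) ≤ 1 - z * x := hden z hz x hx
      have h2 : 1 - z * x ≤ 1 - z * b := by nlinarith [hx.2]
      have hne : (1:ℝ) - z * x ≠ 0 := by linarith
      have heq : z * x / (1 - z * x) = -1 + 1 / (1 - z * x) := by
        field_simp
        ring
      rw [heq]
      have : 1 / (1 - z * b) ≤ 1 / (1 - z * x) :=
        one_div_le_one_div_of_le (by linarith) h2
      linarith
    have := integral_mono_ae (integrable_const _) (hint z hz) hle
    rw [integral_const, probReal_univ, smul_eq_mul, one_mul] at this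
    have : (0:ℝ) < 1 / (1 - z * b) := by positivity
    linarith [integral_mono_ae (integrable_const (-1 + 1 / (1 - z * b))) (hint z hz) hle,
      (by rw [integral_const, probReal_univ, smul_eq_mul, one_mul] :
        (∫ _ : ℝ, (-1 + 1 / (1 - z * b)) ∂μ) = -1 + 1 / (1 - z * b))]
  -- tendsto at -∞
  have htend : Tendsto (fun z => ∫ x, z * x / (1 - z * x) ∂μ) atBot (nhds (-1)) := by
    have h := tendsto_integral_filter_of_dominated_convergence (μ := μ)
      (l := atBot) (F := fun z x => z * x / (1 - z * x)) (f := fun _ => (-1 : ℝ))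
      (fun _ => (1:ℝ))
      (Eventually.of_forall fun z => hmeas z) ?_ (integrable_const _) ?_
    · simpa using h
    · filter_upwards [eventually_le_atBot (0:ℝ)] with z hz
      filter_upwards [hsupp] with x hx
      have h1 : (1:ℝ) ≤ 1 - z * x := hden z hz x hx
      have hzx : z * x ≤ 0 := mul_nonpos_of_nonpos_of_nonneg hz (ha.le.trans hx.1)
      rw [Real.norm_eq_abs, abs_div, abs_of_nonpos hzx, abs_of_pos (by linarith : (0:ℝ) < 1 - z*x)]
      rw [div_le_one (by linarith)]
      linarith
    · filter_upwards [hsupp] with x hx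
      have hx0 : (0:ℝ) < x := ha.trans_le hx.1
      have h1 : Tendsto (fun z : ℝ => 1 - z * x) atBot atTop := by
        have : Tendsto (fun z : ℝ => z * x) atBot atBot :=
          tendsto_id.atBot_mul_const hx0
        have hneg : Tendsto (fun z : ℝ => -(z * x)) atBot atTop :=
          tendsto_neg_atBot_atTop.comp this
        have := tendsto_atTop_add_const_left atBot 1 hneg
        exact this.congr (fun z => by ring)
      have h2 : Tendsto (fun z : ℝ => (1 - z * x)⁻¹) atBot (nhds 0) :=
        h1.inv_tendsto_atTop
      have h3 : Tendsto (fun z : ℝ => -1 + (1 - z * x)⁻¹) atBot (nhds (-1 + 0)) :=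
        tendsto_const_nhds.add h2
      rw [add_zero] at h3
      refine h3.congr' ?_
      filter_upwards [eventually_le_atBot (0:ℝ)] with z hz
      have h1' : (1:ℝ) ≤ 1 - z * x := hden z hz x hx
      have hne : (1:ℝ) - z * x ≠ 0 := by linarith
      field_simp
      ring
  -- strict monotonicity
  have hsm : StrictMonoOn (fun z => ∫ x, z * x / (1 - z * x) ∂μ) (Set.Iic 0) := by
    apply strictMonoOn_of_deriv_pos (convex_Iic 0)
    · intro z hz
      exact ((hderiv z hz).2.continuousAt).continuousWithinAt
    · intro z hz
      rw [interior_Iic] at hz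
      rw [(hderiv z hz.le).2.deriv]
      exact hpos z hz.le
  refine ⟨fun z hz => ⟨(hderiv z hz).2, hpos z hz⟩, hpsi0, htend, hsm, ?_, hsm.injOn, ?_⟩
  · -- MapsTo
    intro z hz
    exact ⟨hlb z hz, hub z hz⟩
  · -- SurjOn
    intro y hy
    have hev : ∀ᶠ z in atBot, (∫ x, z * x / (1 - z * x) ∂μ) < y :=
      htend.eventually_lt_const hy.1
    obtain ⟨z₀, hz₀⟩ := (hev.and (eventually_le_atBot (0:ℝ))).exists
    have hcont : ContinuousOn (fun z => ∫ x, z * x / (1 - z * x) ∂μ) (Set.Icc z₀ 0) := by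
      intro z hz
      exact ((hderiv z hz.2).2.continuousAt).continuousWithinAt
    have := intermediate_value_Icc hz₀.2 hcont
    have hy' : y ∈ Set.Icc ((fun z => ∫ x, z * x / (1 - z * x) ∂μ) z₀)
        ((fun z => ∫ x, z * x / (1 - z * x) ∂μ) 0) := by
      constructor
      · exact hz₀.1.le
      · simpa [hpsi0] using hy.2
    obtain ⟨z, hz, hzy⟩ := this hy'
    exact ⟨z, hz.2, hzy⟩
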